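/- Let e and l be positive integers, let a : ℕ → ℚ_p satisfy ‖a_i‖_p ≤ 1 for all i, and let t ∈ K satisfy ‖t‖ ≤ p^{-1/e}. Then the series Σ_{i ≥ l} (a_i/(i+1))·t^{i+1} converges in K, and for any real number ν such that ν ≤ (i+1)/e - ⌊log_p(i+1)⌋ for all i ≥ l, its sum has norm at most p^{-ν}. -/

import Mathlib

/-- The tail `Σ_{i ≥ l} (a_i/(i+1)) t^{i+1}` of the termwise antiderivative of a
`p`-adically integral power series converges for `‖t‖ ≤ p^{-1/e}`, and its sum has
norm at most `p^{-ν}` whenever `ν ≤ (i+1)/e - ⌊log_p(i+1)⌋` for all `i ≥ l`. -/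
theorem tiny_integral_truncation_bound {p : ℕ} [Fact p.Prime] {K : Type*} [NormedField K]
    [CompleteSpace K] [Algebra ℚ_[p] K]
    (hna : ∀ x y : K, ‖x + y‖ ≤ max ‖x‖ ‖y‖)
    (hiso : ∀ a : ℚ_[p], ‖algebraMap ℚ_[p] K a‖ = ‖a‖)
    (e l : ℕ) (he : 0 < e) (hl : 0 < l)
    (a : ℕ → ℚ_[p]) (ha : ∀ i, ‖a i‖ ≤ 1)
    (t : K) (ht : ‖t‖ ≤ (p : ℝ) ^ (-(1 : ℝ) / e)) :
    Summable (fun i : ℕ =>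
      algebraMap ℚ_[p] K (a (i + l) / (((i + l : ℕ) : ℚ_[p]) + 1)) * t ^ (i + l + 1)) ∧
    ∀ ν : ℝ,
      (∀ i : ℕ, l ≤ i → ν ≤ ((i : ℝ) + 1) / e - (Nat.log p (i + 1) : ℝ)) →
      ‖∑' i : ℕ,
          algebraMap ℚ_[p] K (a (i + l) / (((i + l : ℕ) : ℚ_[p]) + 1)) * t ^ (i + l + 1)‖ ≤
        (p : ℝ) ^ (-ν) := by
  have hp1 : (1:ℝ) < p := by exact_mod_cast (Fact.out : p.Prime).one_lt
  have hp0 : (0:ℝ) < p := lt_trans one_pos hp1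
  set r : ℝ := (p:ℝ) ^ (-(1:ℝ)/e) with hr
  have hr0 : 0 ≤ r := Real.rpow_nonneg hp0.le _
  have hr1 : r < 1 :=
    Real.rpow_lt_one_of_one_lt_of_neg hp1 (div_neg_of_neg_of_pos (by norm_num) (by positivity))
  set f := fun i : ℕ =>
    algebraMap ℚ_[p] K (a (i + l) / (((i + l : ℕ) : ℚ_[p]) + 1)) * t ^ (i + l + 1) with hf
  -- coefficient bound
  have hcoef : ∀ i : ℕ, ‖algebraMap ℚ_[p] K (a (i + l) / (((i + l : ℕ) : ℚ_[p]) + 1))‖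
      ≤ (p:ℝ) ^ ((Nat.log p (i + l + 1) : ℝ)) := by
    intro i
    have hn : ((i+l+1 : ℕ) : ℚ_[p]) ≠ 0 := by
      exact_mod_cast (Nat.succ_ne_zero (i+l))
    have hnn : (((i + l : ℕ) : ℚ_[p]) + 1) = ((i+l+1 : ℕ) : ℚ_[p]) := by push_cast; ring
    have hnormn : ‖((i+l+1 : ℕ) : ℚ_[p])‖ = (p:ℝ) ^ (-(padicValNat p (i+l+1) : ℤ)) := by
      rw [Padic.norm_eq_zpow_neg_valuation hn, Padic.valuation_natCast]
    have hpos : (0:ℝ) < ‖((i+l+1 : ℕ) : ℚ_[p])‖ := norm_pos_iff.mpr hn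
    rw [hiso, hnn, norm_div]
    calc ‖a (i+l)‖ / ‖((i+l+1:ℕ):ℚ_[p])‖ ≤ 1 / ‖((i+l+1:ℕ):ℚ_[p])‖ := by
          gcongr; exact ha _
      _ = (p:ℝ) ^ ((padicValNat p (i+l+1) : ℝ)) := by
          rw [hnormn, one_div, ← zpow_neg, neg_neg, ← Real.rpow_intCast]
          norm_num
      _ ≤ (p:ℝ) ^ ((Nat.log p (i+l+1) : ℝ)) := by
          apply Real.rpow_le_rpow_of_exponent_le hp1.le
          exact_mod_cast padicValNat_le_nat_log (i+l+1)
  have hpowr : ∀ i : ℕ, ‖t ^ (i+l+1)‖ ≤ r ^ (i+l+1) := by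
    intro i
    rw [norm_pow]
    exact pow_le_pow_left₀ (norm_nonneg t) ht _
  -- summability
  have hsum : Summable f := by
    have h1 : Summable (fun n : ℕ => (n:ℝ) * r ^ n) := by
      simpa using summable_pow_mul_geometric_of_norm_lt_one 1
        (by rwa [Real.norm_of_nonneg hr0] : ‖r‖ < 1)
    have h2 : Summable (fun i : ℕ => ((i+l+1 : ℕ):ℝ) * r ^ (i+l+1)) := by
      refine (h1.comp_injective (add_left_injective (l+1))).congr fun i => ?_
      simp only [Function.comp_apply]
      rw [show i + (l+1) = i + l + 1 from (add_assoc i l 1).symm]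
    refine Summable.of_norm_bounded h2 (fun i => ?_)
    rw [hf, norm_mul]
    have hb : ‖algebraMap ℚ_[p] K (a (i + l) / (((i + l : ℕ) : ℚ_[p]) + 1))‖
        ≤ ((i+l+1 : ℕ):ℝ) := by
      refine (hcoef i).trans ?_
      rw [Real.rpow_natCast]
      exact_mod_cast Nat.pow_log_le_self p (Nat.succ_ne_zero (i+l))
    exact mul_le_mul hb (hpowr i) (norm_nonneg _) (by positivity)
  refine ⟨hsum, fun ν hν => ?_⟩
  haveI : IsUltrametricDist K := IsUltrametricDist.isUltrametricDist_of_forall_norm_add_le_max_norm hna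
  apply IsUltrametricDist.norm_tsum_le_of_forall_le_of_nonneg (Real.rpow_nonneg hp0.le _)
  intro i
  have key : ‖f i‖ ≤ (p:ℝ) ^ ((Nat.log p (i+l+1) : ℝ) - ((i:ℝ)+l+1)/e) := by
    rw [hf, norm_mul]
    have ht2 : ‖t ^ (i+l+1)‖ ≤ (p:ℝ) ^ ((-(1:ℝ)/e) * ((i:ℝ)+l+1)) := by
      refine (hpowr i).trans_eq ?_
      rw [← Real.rpow_natCast r, ← Real.rpow_mul hp0.le]
      push_cast; ring_nf
    calc _ ≤ (p:ℝ) ^ ((Nat.log p (i+l+1) : ℝ)) * (p:ℝ) ^ ((-(1:ℝ)/e) * ((i:ℝ)+l+1)) :=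
          mul_le_mul (hcoef i) ht2 (norm_nonneg _) (Real.rpow_nonneg hp0.le _)
      _ = _ := by rw [← Real.rpow_add hp0]; congr 1; ring
  refine key.trans (Real.rpow_le_rpow_of_exponent_le hp1.le ?_)
  have := hν (i + l) (Nat.le_add_left l i)
  push_cast at this ⊢
  linarith
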